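/- Let 𝒜 be a compact Hausdorff abelian topological group, L ≥ 2, β_0, …, β_{L−1} ∈ 𝒜, 0 ≤ s ≤ L−1, and let w : ℤ → 𝒜 satisfy w_{Lm+k−s} = w_m β_k for all m ∈ ℤ and 0 ≤ k ≤ L−1. Let χ be a unitary character of 𝒜 and assume the autocorrelation coefficient η(1) exists. If χ(β_0) ≠ χ(β_{L−1}), then |η(1)| < 1. -/

import Mathlib

open Finset Filter

private lemma sumIoc_split (f : ℤ → ℂ) {a b c : ℤ} (h1 : a ≤ b) (h2 : b ≤ c) :
    ∑ i ∈ Ioc a c, f i = ∑ i ∈ Ioc a b, f i + ∑ i ∈ Ioc b c, f i := by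
  rw [← Finset.Ioc_union_Ioc_eq_Ioc h1 h2, Finset.sum_union]
  refine Finset.disjoint_left.2 fun x hx h'x => ?_
  exact lt_irrefl _ ((mem_Ioc.1 h'x).1.trans_le (mem_Ioc.1 hx).2)

private lemma sumIoc_norm_le (f : ℤ → ℂ) (hf : ∀ j, ‖f j‖ = 1) (a b : ℤ) (h : a ≤ b) :
    ‖∑ i ∈ Ioc a b, f i‖ ≤ ((b - a : ℤ) : ℝ) := by
  calc ‖∑ i ∈ Ioc a b, f i‖ ≤ ∑ i ∈ Ioc a b, ‖f i‖ := norm_sum_le _ _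
  _ = (Ioc a b).card := by simp [hf]
  _ = ((b - a : ℤ) : ℝ) := by
    rw [Int.card_Ioc]
    have h2 : ((b - a).toNat : ℤ) = b - a := Int.toNat_of_nonneg (by omega)
    push_cast
    exact_mod_cast h2

/-- main reindexing: the window `[-(LN+s), LN+L-1-s]` decomposes into blocks. -/
private lemma reindex (f : ℤ → ℂ) (L : ℕ) (hL : 0 < L) (s : ℕ) (N : ℕ) :
    ∑ p ∈ Icc (-(N:ℤ)) (N:ℤ) ×ˢ Finset.range L, f ((L:ℤ)*p.1 + p.2 - s)
      = ∑ j ∈ Ioc (-((L:ℤ)*N + s) - 1) ((L:ℤ)*N + L - 1 - s), f j := by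
  refine Finset.sum_nbij' (fun p => (L:ℤ) * p.1 + p.2 - s)
    (fun j => (((j + s) / L : ℤ), ((j + s) % L).toNat)) ?_ ?_ ?_ ?_ (fun _ _ => rfl)
  · -- membership of image
    intro p hp
    simp only [Finset.mem_product, mem_Icc, Finset.mem_range] at hp
    simp only [mem_Ioc]
    have hL0 : (0:ℤ) < L := by exact_mod_cast hL
    have h1 : (L:ℤ) * (-(N:ℤ)) ≤ L * p.1 := by nlinarith [hp.1.1]
    have h2 : (L:ℤ) * p.1 ≤ L * N := by nlinarith [hp.1.2]
    have hk : (p.2 : ℤ) < L := by exact_mod_cast hp.2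
    constructor <;> [nlinarith; nlinarith]
  · -- membership of preimage
    intro j hj
    simp only [mem_Ioc] at hj
    simp only [Finset.mem_product, mem_Icc, Finset.mem_range]
    have hL0 : (0:ℤ) < L := by exact_mod_cast hL
    have hdm := Int.mul_ediv_add_emod (j + s) L
    have hr0 : 0 ≤ (j + s) % L := Int.emod_nonneg _ (by omega)
    have hrL : (j + s) % L < L := Int.emod_lt_of_pos _ hL0
    refine ⟨⟨?_, ?_⟩, by omega⟩
    · have h1 : (L:ℤ) * (-(N:ℤ) - 1) < L * ((j + s) / L) := by nlinarith
      have := lt_of_mul_lt_mul_left h1 (le_of_lt hL0)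
      omega
    · have h1 : (L:ℤ) * ((j + s) / L) < L * ((N:ℤ) + 1) := by nlinarith
      have := lt_of_mul_lt_mul_left h1 (le_of_lt hL0)
      omega
  · -- left inverse
    intro p hp
    simp only [Finset.mem_product, mem_Icc, Finset.mem_range] at hp
    have hL0 : (0:ℤ) < L := by exact_mod_cast hL
    have hk : (p.2 : ℤ) < L := by exact_mod_cast hp.2
    have e1 : (L:ℤ) * p.1 + p.2 - s + s = (p.2 : ℤ) + (L:ℤ) * p.1 := by ring
    have ed : ((p.2:ℤ) + (L:ℤ) * p.1) / L = p.1 := by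
      rw [Int.add_mul_ediv_left _ _ (by omega : (L:ℤ) ≠ 0),
        Int.ediv_eq_zero_of_lt (by positivity) hk]; ring
    have em : ((p.2:ℤ) + (L:ℤ) * p.1) % L = p.2 := by
      rw [Int.add_mul_emod_self_left, Int.emod_eq_of_lt (by positivity) hk]
    rw [e1, ed, em]
    simp
  · -- right inverse
    intro j hj
    have hL0 : (0:ℤ) < L := by exact_mod_cast hL
    have hdm := Int.mul_ediv_add_emod (j + s) L
    have hr0 : 0 ≤ (j + s) % L := Int.emod_nonneg _ (by omega)
    dsimp only
    rw [Int.toNat_of_nonneg hr0]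
    omega

private lemma tendsto_div_lin (c : ℂ) :
    Tendsto (fun N : ℕ => c / (2 * (N:ℂ) + 1)) atTop (nhds 0) := by
  rw [tendsto_zero_iff_norm_tendsto_zero]
  apply squeeze_zero' (Filter.Eventually.of_forall fun n => norm_nonneg _)
    (g := fun n : ℕ => ‖c‖ / n) ?_ (tendsto_const_div_atTop_nhds_zero_nat ‖c‖)
  filter_upwards [Filter.eventually_ge_atTop 1] with n hn
  have h1 : ((2 * n + 1 : ℕ) : ℂ) = 2 * (n:ℂ) + 1 := by push_cast; ring
  rw [norm_div, ← h1]
  have : ‖((2 * n + 1 : ℕ) : ℂ)‖ = ((2 * n + 1 : ℕ) : ℝ) := by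
    rw [Complex.norm_natCast]
  rw [this]
  apply div_le_div_of_nonneg_left (norm_nonneg _) (by positivity)
  push_cast; linarith

private lemma unit_cancel (x y z : ℂ) (h : x * (starRingEnd ℂ) x = 1) :
    (x * y) * (starRingEnd ℂ) (x * z) = y * (starRingEnd ℂ) z := by
  rw [map_mul]
  linear_combination y * (starRingEnd ℂ) z * h

private lemma IccIoc (a b : ℤ) : Finset.Icc a b = Finset.Ioc (a - 1) b := by
  ext x; simp only [Finset.mem_Icc, Finset.mem_Ioc]; omega

/-- `AutoCorr χ w m z` says that the autocorrelation coefficient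
`η(m) = lim_{N→∞} (1/(2N+1)) Σ_{j=−N}^{N} χ(w_j)·conj(χ(w_{j+m}))`
exists and equals `z`. -/
def AutoCorr {A : Type*} (χ : A → ℂ) (w : ℤ → A) (m : ℤ) (z : ℂ) : Prop :=
  Filter.Tendsto (fun N : ℕ =>
      (∑ j ∈ Finset.Icc (-(N : ℤ)) (N : ℤ),
          χ (w j) * (starRingEnd ℂ) (χ (w (j + m)))) / (2 * (N : ℂ) + 1))
    Filter.atTop (nhds z)

set_option maxHeartbeats 1000000 in
/-- For a pseudo-fixed point `w` of a bijective abelian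
substitution of constant length `L` with columns `θ ↦ θβ_k` and shift `s`,
weighted by a unitary character `χ`: if `χ(β_0) ≠ χ(β_{L−1})` and `η(1)`
exists, then `|η(1)| < 1`. -/
theorem eta_one_lt_one_of_distinct_columns {A : Type*} [TopologicalSpace A]
    [CompactSpace A] [T2Space A] [CommGroup A] [IsTopologicalGroup A]
    (L : ℕ) (hL : 2 ≤ L) (β : Fin L → A) (s : ℕ) (hs : s ≤ L - 1)
    (w : ℤ → A)
    (hw : ∀ (m : ℤ) (k : Fin L),
      w ((L : ℤ) * m + (k : ℤ) - (s : ℤ)) = w m * β k)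
    (χ : A →* ℂ) (hχcont : Continuous χ)
    (hχunit : ∀ a : A, ‖χ a‖ = 1)
    (η1 : ℂ) (hη1 : AutoCorr χ w 1 η1)
    (hne : χ (β ⟨0, by omega⟩) ≠ χ (β ⟨L - 1, by omega⟩)) :
    ‖η1‖ < 1 := by
  set f : ℤ → ℂ := fun j => χ (w j) * (starRingEnd ℂ) (χ (w (j + 1))) with hf
  have hχnorm : ∀ a : A, ‖χ a‖ = 1 := fun a => hχunit a
  have hone : ∀ a : A, χ a * (starRingEnd ℂ) (χ a) = 1 := by
    intro a
    rw [Complex.mul_conj, Complex.normSq_eq_norm_sq, hχunit]; norm_num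
  have hfnorm : ∀ j : ℤ, ‖f j‖ = 1 := by
    intro j
    rw [hf]
    simp only [norm_mul, RCLike.norm_conj, hχnorm, mul_one]
  set b' : ℕ → A := fun k => β ⟨k % L, Nat.mod_lt k (by omega)⟩ with hb'
  have hb'eq : ∀ (k : ℕ) (h : k < L), b' k = β ⟨k, h⟩ := by
    intro k h
    simp only [hb']
    congr 1
    exact Fin.ext (Nat.mod_eq_of_lt h)
  have hw' : ∀ (m : ℤ) (k : ℕ), k < L → w ((L:ℤ) * m + k - s) = w m * b' k := by
    intro m k hk
    rw [hb'eq k hk]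
    exact_mod_cast hw m ⟨k, hk⟩
  set C : ℂ := ∑ k ∈ Finset.range (L-1), χ (b' k) * (starRingEnd ℂ) (χ (b' (k+1))) with hC
  set d : ℂ := χ (b' (L-1)) * (starRingEnd ℂ) (χ (b' 0)) with hd
  -- inner block sums
  have hfk : ∀ (m : ℤ) (k : ℕ), k < L - 1 →
      f ((L:ℤ) * m + k - s) = χ (b' k) * (starRingEnd ℂ) (χ (b' (k+1))) := by
    intro m k hk
    have h1 : (L:ℤ) * m + k - s + 1 = (L:ℤ) * m + ((k+1 : ℕ) : ℤ) - s := by push_cast; ring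
    rw [hf]
    simp only
    rw [h1, hw' m k (by omega), hw' m (k+1) (by omega), map_mul, map_mul]
    exact unit_cancel _ _ _ (hone _)
  have hflast : ∀ m : ℤ, f ((L:ℤ) * m + ((L-1 : ℕ) : ℤ) - s) = d * f m := by
    intro m
    have h1 : (L:ℤ) * m + ((L-1:ℕ):ℤ) - s + 1 = (L:ℤ) * (m+1) + ((0:ℕ):ℤ) - s := by
      have : ((L-1:ℕ):ℤ) = (L:ℤ) - 1 := by push_cast [Nat.cast_sub (by omega : 1 ≤ L)]; ring
      rw [this]; push_cast; ring
    rw [hf]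
    simp only
    rw [h1, hw' m (L-1) (by omega), hw' (m+1) 0 (by omega), map_mul, map_mul, map_mul, hd]
    ring
  have hinner : ∀ m : ℤ, ∑ k ∈ Finset.range L, f ((L:ℤ) * m + k - s) = C + d * f m := by
    intro m
    have hr : Finset.range L = Finset.range ((L-1) + 1) := by congr 1; omega
    rw [hr, Finset.sum_range_succ, hflast m, hC]
    congr 1
    exact Finset.sum_congr rfl fun k hk => hfk m k (Finset.mem_range.1 hk)
  -- partial sums
  set S : ℕ → ℂ := fun N => ∑ j ∈ Finset.Icc (-(N:ℤ)) (N:ℤ), f j with hS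
  have hSlim : Tendsto (fun N : ℕ => S N / (2 * (N:ℂ) + 1)) atTop (nhds η1) := hη1
  set T : ℕ → ℂ := fun N => ∑ j ∈ Finset.Ioc (-((L:ℤ)*N + s) - 1) ((L:ℤ)*N + L - 1 - s), f j
    with hT
  have hTN : ∀ N : ℕ, T N = (2 * (N:ℂ) + 1) * C + d * S N := by
    intro N
    rw [hT]
    simp only
    rw [← reindex f L (by omega) s N, Finset.sum_product]
    rw [Finset.sum_congr rfl fun m _ => hinner m, Finset.sum_add_distrib, Finset.sum_const,
      ← Finset.mul_sum, Int.card_Icc]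
    have h2 : ((N:ℤ) + 1 - -(N:ℤ)).toNat = 2*N+1 := by omega
    rw [h2]
    push_cast
    rw [hS]
    ring
  -- boundary error
  set E : ℕ → ℂ := fun N => T N - S (L * N) with hE
  have hM : ∀ N : ℕ, ((L*N : ℕ) : ℤ) = (L:ℤ) * N := by intro N; push_cast; ring
  have hEbound : ∀ N : ℕ, ‖E N‖ ≤ (L:ℝ) - 1 := by
    intro N
    have hLN0 : (0:ℤ) ≤ (L:ℤ) * N := by positivity
    have hsplit1 : T N = (∑ j ∈ Finset.Ioc (-((L:ℤ)*N + s) - 1) (-((L:ℤ)*N) - 1), f j)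
        + (∑ j ∈ Finset.Ioc (-((L:ℤ)*N) - 1) ((L:ℤ)*N), f j)
        + (∑ j ∈ Finset.Ioc ((L:ℤ)*N) ((L:ℤ)*N + L - 1 - s), f j) := by
      have hsZ : (s:ℤ) ≤ (L:ℤ) - 1 := by omega
      rw [hT]
      simp only
      rw [sumIoc_split f (show -((L:ℤ)*N + s) - 1 ≤ -((L:ℤ)*N) - 1 by omega)
          (show -((L:ℤ)*N) - 1 ≤ (L:ℤ)*N + L - 1 - s by omega),
        sumIoc_split f (show -((L:ℤ)*N) - 1 ≤ (L:ℤ)*N by omega)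
          (show (L:ℤ)*N ≤ (L:ℤ)*N + L - 1 - s by omega)]
      ring
    have hmid : S (L*N) = ∑ j ∈ Finset.Ioc (-((L:ℤ)*N) - 1) ((L:ℤ)*N), f j := by
      rw [hS]
      simp only
      rw [hM N, IccIoc]
    have hEeq : E N = (∑ j ∈ Finset.Ioc (-((L:ℤ)*N + s) - 1) (-((L:ℤ)*N) - 1), f j)
        + (∑ j ∈ Finset.Ioc ((L:ℤ)*N) ((L:ℤ)*N + L - 1 - s), f j) := by
      rw [hE]; simp only; rw [hsplit1, ← hmid]; ring
    rw [hEeq]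
    have b1 := sumIoc_norm_le f hfnorm (-((L:ℤ)*N + s) - 1) (-((L:ℤ)*N) - 1) (by omega)
    have b2 := sumIoc_norm_le f hfnorm ((L:ℤ)*N) ((L:ℤ)*N + L - 1 - s) (by omega)
    have hcast1 : (((-((L:ℤ)*N) - 1) - (-((L:ℤ)*N + s) - 1) : ℤ) : ℝ) = (s:ℝ) := by
      push_cast; ring
    have hcast2 : ((((L:ℤ)*N + L - 1 - s) - ((L:ℤ)*N) : ℤ) : ℝ) = (L:ℝ) - 1 - s := by
      push_cast; ring
    rw [hcast1] at b1
    rw [hcast2] at b2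
    calc ‖_ + _‖ ≤ _ := norm_add_le _ _
    _ ≤ (s:ℝ) + ((L:ℝ) - 1 - s) := add_le_add b1 b2
    _ = (L:ℝ) - 1 := by ring
  -- the key identity after division
  have h2N : ∀ N : ℕ, (2 * (N:ℂ) + 1) ≠ 0 := by
    intro N
    have : (0:ℝ) < 2*N+1 := by positivity
    intro h
    have := congrArg Complex.re h
    simp at this
    norm_cast at this
  have hid : ∀ N : ℕ, S (L*N) / (2 * (N:ℂ) + 1)
      = C + d * (S N / (2 * (N:ℂ) + 1)) - E N / (2 * (N:ℂ) + 1) := by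
    intro N
    have : S (L*N) = (2 * (N:ℂ) + 1) * C + d * S N - E N := by
      rw [hE]; simp only; rw [hTN N]; ring
    rw [this, sub_div, add_div, mul_div_cancel_left₀ _ (h2N N), mul_div_assoc]
  -- limits
  have hLN : Tendsto (fun N : ℕ => L * N) atTop atTop := by
    apply Filter.tendsto_atTop_mono (fun n => ?_) Filter.tendsto_id
    calc (id n : ℕ) = 1 * n := (one_mul n).symm
    _ ≤ L * n := Nat.mul_le_mul_right n (by omega)
  have hcomp : Tendsto (fun N : ℕ => S (L*N) / (2 * ((L*N : ℕ):ℂ) + 1)) atTop (nhds η1) :=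
    hSlim.comp hLN
  have hDlim : Tendsto (fun N : ℕ => (2 * ((L*N : ℕ):ℂ) + 1) / (2 * (N:ℂ) + 1))
      atTop (nhds (L:ℂ)) := by
    have heq : ∀ N : ℕ, (2 * ((L*N : ℕ):ℂ) + 1) / (2 * (N:ℂ) + 1)
        = (L:ℂ) + (1 - (L:ℂ)) / (2 * (N:ℂ) + 1) := by
      intro N
      rw [div_eq_iff (h2N N), add_mul, div_mul_cancel₀ _ (h2N N)]
      push_cast
      ring
    rw [show nhds (L:ℂ) = nhds ((L:ℂ) + 0) by rw [add_zero]]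
    exact Tendsto.congr (fun N => (heq N).symm) (tendsto_const_nhds.add (tendsto_div_lin _))
  have hleft : Tendsto (fun N : ℕ => S (L*N) / (2 * (N:ℂ) + 1)) atTop (nhds (η1 * L)) := by
    have hprod := hcomp.mul hDlim
    apply hprod.congr
    intro N
    have hD0 : (2 * ((L*N : ℕ):ℂ) + 1) ≠ 0 := h2N (L*N)
    rw [div_mul_div_comm, mul_comm (S (L*N)) _, mul_div_mul_left _ _ hD0]
  have hElim : Tendsto (fun N : ℕ => E N / (2 * (N:ℂ) + 1)) atTop (nhds 0) := by
    rw [tendsto_zero_iff_norm_tendsto_zero]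
    apply squeeze_zero' (Filter.Eventually.of_forall fun n => norm_nonneg _)
      (g := fun N : ℕ => (L:ℝ) / N) ?_ (tendsto_const_div_atTop_nhds_zero_nat _)
    filter_upwards [Filter.eventually_ge_atTop 1] with n hn
    have hnc : ‖(2 * (n:ℂ) + 1)‖ = 2*(n:ℝ)+1 := by
      have h3 : (2 * (n:ℂ) + 1) = ((2*n+1 : ℕ) : ℂ) := by push_cast; ring
      rw [h3, Complex.norm_natCast]
      push_cast; ring
    rw [norm_div, hnc]
    have hn1 : (1:ℝ) ≤ n := by exact_mod_cast hn
    have hEL : ‖E n‖ ≤ (L:ℝ) := by linarith [hEbound n]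
    exact div_le_div₀ (by positivity) hEL (by linarith) (by linarith)
  have hright : Tendsto (fun N : ℕ => S (L*N) / (2 * (N:ℂ) + 1)) atTop
      (nhds (C + d * η1 - 0)) := by
    apply Tendsto.congr (fun N => (hid N).symm)
    exact (tendsto_const_nhds.add ((tendsto_const_nhds.mul hSlim))).sub hElim
  have hkey : η1 * (L:ℂ) = C + d * η1 := by
    have := tendsto_nhds_unique hleft hright
    rw [sub_zero] at this
    exact this
  -- norm estimates
  have hdnormSq : Complex.normSq d = 1 := by
    have : ‖d‖ = 1 := by
      rw [hd, norm_mul, RCLike.norm_conj, hχnorm, hχnorm, mul_one]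
    have h2 : ‖d‖ = 1 := this
    rw [← Complex.sq_norm, h2]; norm_num
  have hdne : d ≠ 1 := by
    intro h
    apply hne
    have h2 : χ (b' (L-1)) * ((starRingEnd ℂ) (χ (b' 0)) * χ (b' 0)) = χ (b' 0) := by
      calc χ (b' (L-1)) * ((starRingEnd ℂ) (χ (b' 0)) * χ (b' 0))
          = (χ (b' (L-1)) * (starRingEnd ℂ) (χ (b' 0))) * χ (b' 0) := by ring
      _ = χ (b' 0) := by rw [← hd, h, one_mul]
    rw [mul_comm ((starRingEnd ℂ) (χ (b' 0))) (χ (b' 0)), hone, mul_one] at h2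
    rw [← hb'eq 0 (by omega), ← hb'eq (L-1) (by omega)]
    exact h2.symm
  have hCbound : ‖C‖ ≤ (L:ℝ) - 1 := by
    have : ‖C‖ ≤ (L:ℝ) - 1 := by
      calc ‖C‖ ≤ ∑ k ∈ Finset.range (L-1), ‖χ (b' k) * (starRingEnd ℂ) (χ (b' (k+1)))‖ :=
        norm_sum_le _ _
      _ = ∑ k ∈ Finset.range (L-1), 1 := by
        apply Finset.sum_congr rfl
        intro k _
        rw [norm_mul, RCLike.norm_conj, hχnorm, hχnorm, mul_one]
      _ = ((L-1 : ℕ) : ℝ) := by rw [Finset.sum_const, Finset.card_range]; simp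
      _ = (L:ℝ) - 1 := by push_cast [Nat.cast_sub (by omega : 1 ≤ L)]; ring
    exact this
  have hdre : d.re < 1 := by
    rcases lt_or_eq_of_le (Complex.re_le_norm d) with h | h
    · have : ‖d‖ = 1 := by
        have := hdnormSq
        have h2 : ‖d‖ ^ 2 = 1 := by rw [Complex.sq_norm, this]
        nlinarith [norm_nonneg d]
      linarith [this ▸ h]
    · exfalso
      apply hdne
      have habs : ‖d‖ = 1 := by
        have h2 : ‖d‖ ^ 2 = 1 := by rw [Complex.sq_norm, hdnormSq]
        nlinarith [norm_nonneg d]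
      have hre : d.re = 1 := by rw [h, habs]
      have him : d.im = 0 := by
        have := hdnormSq
        rw [Complex.normSq_apply, hre] at this
        nlinarith
      exact Complex.ext hre him
  have hgt : (L:ℝ) - 1 < ‖(L:ℂ) - d‖ := by
    have hnsq : Complex.normSq ((L:ℂ) - d) = (L:ℝ)^2 + 1 - 2*L*d.re := by
      rw [Complex.normSq_apply]
      simp only [Complex.sub_re, Complex.sub_im, Complex.natCast_re, Complex.natCast_im]
      have := hdnormSq
      rw [Complex.normSq_apply] at this
      nlinarith
    have hsq : ((L:ℝ) - 1)^2 < ‖(L:ℂ) - d‖ ^ 2 := by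
      rw [Complex.sq_norm, hnsq]
      have hL2 : (2:ℝ) ≤ L := by exact_mod_cast hL
      nlinarith
    have hL1 : (0:ℝ) ≤ (L:ℝ) - 1 := by
      have : (2:ℝ) ≤ L := by exact_mod_cast hL
      linarith
    exact lt_of_pow_lt_pow_left₀ 2 (norm_nonneg _) hsq
  have heq2 : ‖η1‖ * ‖(L:ℂ) - d‖ = ‖C‖ := by
    rw [← norm_mul]
    congr 1
    linear_combination hkey
  have hpos : (0:ℝ) < ‖(L:ℂ) - d‖ := by
    have : (2:ℝ) ≤ L := by exact_mod_cast hL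
    linarith
  have : ‖η1‖ * ‖(L:ℂ) - d‖ < 1 * ‖(L:ℂ) - d‖ := by
    rw [heq2, one_mul]
    exact lt_of_le_of_lt hCbound hgt
  exact lt_of_mul_lt_mul_right this (le_of_lt hpos)
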